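/- For an ordered multi-index J and a sub-multi-index I ⊆ J with complement K = J \ I, one has e_I · e_J = (-1)^{|K|(n-|J|)} e_K when the ordered union I ∪ K is an even permutation of J; and e_I · e_J = 0 whenever I ⊄ J. -/

import Mathlib

set_option maxHeartbeats 1000000


open ExteriorAlgebra MeasureTheory

noncomputable section

abbrev Evec (n : ℕ) := EuclideanSpace ℝ (Fin n)
abbrev ExtA (n : ℕ) := ExteriorAlgebra ℝ (Evec n)

/-- the `i`-th standard orthonormal basis vector of `ℝ^n`. -/
def ee {n : ℕ} (i : Fin n) : Evec n := EuclideanSpace.single i 1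

/-- the basis multivector `e_I = e_{i₁} ∧ … ∧ e_{i_k}` for a multi-index
`I = (i₁ < … < i_k)`. -/
def eWedge {n : ℕ} (I : Finset (Fin n)) : ExtA n :=
  ((I.sort (· ≤ ·)).map (fun i => ι ℝ (ee i))).prod

/-- the sign `(-1)^{#{(i,j) ∈ I × Iᶜ | j < i}}`; it is `+1` exactly when the
concatenation of `I` and `Iᶜ` (each written in increasing order) is an even
permutation of `(1,…,n)`. -/
def shuffleSign {n : ℕ} (I : Finset (Fin n)) : ℤ :=
  (-1) ^ ((I ×ˢ Iᶜ).filter (fun p => p.2 < p.1)).card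

/-- A linear endomorphism of the exterior algebra of `ℝ^n` is *the* Hodge star
operator iff it sends each basis multivector `e_I` to `± e_{Iᶜ}`, the sign
being `+1` exactly when `(I, Iᶜ)` is an even permutation of `(1,…,n)`. -/
def IsHodgeStar {n : ℕ} (star : ExtA n →ₗ[ℝ] ExtA n) : Prop :=
  ∀ I : Finset (Fin n), star (eWedge I) = shuffleSign I • eWedge Iᶜ

/-- the scalar (degree-0) part of an element of the exterior algebra. -/
def sc {n : ℕ} (x : ExtA n) : ℝ := algebraMapInv x

/-- the number of inversions of a list of naturals; a list whose entries form a
permutation of a sorted list is an even permutation of it iff its inversion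
count is even. -/
def invCount (l : List ℕ) : ℕ :=
  ((Finset.range l.length ×ˢ Finset.range l.length).filter
    (fun p => p.1 < p.2 ∧ l.getD p.2 0 < l.getD p.1 0)).card

namespace DotBasisAux

variable {n : ℕ}

lemma ianticomm (v w : Evec n) : ι ℝ v * ι ℝ w = - (ι ℝ w * ι ℝ v) :=
  eq_neg_of_add_eq_zero_left (ExteriorAlgebra.ι_add_mul_swap v w)

lemma eWedge_empty : eWedge (∅ : Finset (Fin n)) = 1 := by simp [eWedge]

lemma eWedge_insert (S : Finset (Fin n)) (a : Fin n) (h : a ∉ S) (h2 : ∀ b ∈ S, a ≤ b) :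
    eWedge (insert a S) = ι ℝ (ee a) * eWedge S := by
  rw [eWedge, Finset.sort_insert _ h2 h]
  simp [eWedge]

lemma eWedge_peel (S : Finset (Fin n)) (h : S.Nonempty) :
    eWedge S = ι ℝ (ee (S.min' h)) * eWedge (S.erase (S.min' h)) := by
  conv_lhs => rw [← Finset.insert_erase (S.min'_mem h)]
  exact eWedge_insert _ _ (Finset.notMem_erase _ _)
    (fun b hb => S.min'_le b (Finset.mem_erase.mp hb).2)

lemma iota_mem_mul (S : Finset (Fin n)) : ∀ b ∈ S, ι ℝ (ee b) * eWedge S = 0 := by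
  induction S using Finset.strongInduction with
  | _ S ih =>
    intro b hb
    have hne : S.Nonempty := ⟨b, hb⟩
    rw [eWedge_peel S hne]
    rcases eq_or_ne b (S.min' hne) with hba | hba
    · rw [← mul_assoc, ← hba, ι_sq_zero, zero_mul]
    · have hb' : b ∈ S.erase (S.min' hne) := Finset.mem_erase.mpr ⟨hba, hb⟩
      rw [← mul_assoc, ianticomm, neg_mul, mul_assoc,
        ih _ (Finset.erase_ssubset (S.min'_mem hne)) b hb', mul_zero, neg_zero]

lemma iota_not_mem_mul (S : Finset (Fin n)) : ∀ b ∉ S,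
    ι ℝ (ee b) * eWedge S
      = ((-1 : ℤ) ^ (S.filter (· < b)).card) • eWedge (insert b S) := by
  induction S using Finset.strongInduction with
  | _ S ih =>
    intro b hb
    rcases S.eq_empty_or_nonempty with rfl | hne
    · rw [eWedge_insert ∅ b (by simp) (by simp), eWedge_empty]
      simp
    · set a := S.min' hne with ha
      have haS : a ∈ S := S.min'_mem hne
      have hmin : ∀ x ∈ S, a ≤ x := fun x hx => S.min'_le x hx
      rcases lt_or_gt_of_ne (fun h : b = a => hb (h ▸ haS)) with hlt | hgt
      · -- b < a, so b below everything
        have hfilter : S.filter (· < b) = ∅ := by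
          refine Finset.filter_eq_empty_iff.mpr ?_
          intro x hx hxb
          exact absurd (hxb.trans hlt) (not_lt.mpr (hmin x hx))
        rw [hfilter, eWedge_insert S b hb (fun x hx => ((hlt.trans_le (hmin x hx))).le)]
        simp
      · -- a < b
        have hbe : b ∉ S.erase a := fun h => hb (Finset.mem_erase.mp h).2
        have hins : ι ℝ (ee a) * eWedge (insert b (S.erase a)) = eWedge (insert b S) := by
          rw [← eWedge_insert _ a
            (by simp [hgt.ne, Finset.notMem_erase])
            (by intro x hx
                rcases Finset.mem_insert.mp hx with rfl | hx
                · exact hgt.le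
                · exact hmin x (Finset.mem_erase.mp hx).2),
            Finset.insert_comm, Finset.insert_erase haS]
        have hcard : (S.filter (· < b)).card = ((S.erase a).filter (· < b)).card + 1 := by
          conv_lhs => rw [← Finset.insert_erase haS]
          rw [Finset.filter_insert, if_pos hgt,
            Finset.card_insert_of_notMem
              (fun h => (Finset.notMem_erase a S) (Finset.mem_of_mem_filter a h))]
        rw [eWedge_peel S hne, ← ha, ← mul_assoc, ianticomm, neg_mul, mul_assoc,
          ih _ (Finset.erase_ssubset haS) b hbe, mul_smul_comm, hins, hcard,
          pow_succ, mul_neg_one, neg_smul]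

def mm (A B : Finset (Fin n)) : ℕ := ((A ×ˢ B).filter fun p => p.2 < p.1).card

lemma mm_eq_sum (A B : Finset (Fin n)) : mm A B = ∑ a ∈ A, (B.filter (· < a)).card := by
  rw [mm, Finset.card_filter, Finset.sum_product]
  exact Finset.sum_congr rfl fun a _ => (Finset.card_filter _ _).symm

lemma mm_union_left (A B C : Finset (Fin n)) (h : Disjoint A B) :
    mm (A ∪ B) C = mm A C + mm B C := by
  simp [mm_eq_sum, Finset.sum_union h]

lemma mm_insert_left (a : Fin n) (A B : Finset (Fin n)) (h : a ∉ A) :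
    mm (insert a A) B = (B.filter (· < a)).card + mm A B := by
  simp [mm_eq_sum, Finset.sum_insert h]

lemma mm_add_mm_swap (A B : Finset (Fin n)) (h : Disjoint A B) :
    mm A B + mm B A = A.card * B.card := by
  have h1 : mm A B = ∑ a ∈ A, ∑ b ∈ B, if b < a then 1 else 0 := by
    rw [mm, Finset.card_filter, Finset.sum_product]
  have h2 : mm B A = ∑ a ∈ A, ∑ b ∈ B, if a < b then 1 else 0 := by
    rw [mm, Finset.card_filter, Finset.sum_product, Finset.sum_comm]
  rw [h1, h2, ← Finset.sum_add_distrib]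
  have : ∀ a ∈ A, ((∑ b ∈ B, if b < a then 1 else 0) + ∑ b ∈ B, if a < b then 1 else 0)
      = B.card := by
    intro a haA
    rw [← Finset.sum_add_distrib]
    rw [Finset.card_eq_sum_ones]
    refine Finset.sum_congr rfl fun b hbB => ?_
    have hab : a ≠ b := fun hEq => (Finset.disjoint_left.mp h haA) (hEq ▸ hbB)
    rcases lt_or_gt_of_ne hab with hl | hl
    · simp [hl, hl.not_gt]
    · simp [hl, hl.not_gt]
  rw [Finset.sum_congr rfl this]
  simp [mul_comm]

lemma eWedge_mul_eWedge (A : Finset (Fin n)) : ∀ B : Finset (Fin n), Disjoint A B →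
    eWedge A * eWedge B = ((-1 : ℤ) ^ mm A B) • eWedge (A ∪ B) := by
  induction A using Finset.strongInduction with
  | _ A ih =>
    intro B hAB
    rcases A.eq_empty_or_nonempty with rfl | hne
    · simp [eWedge_empty, mm_eq_sum]
    · set a := A.min' hne with ha
      have haA : a ∈ A := A.min'_mem hne
      have hd' : Disjoint (A.erase a) B := hAB.mono_left (Finset.erase_subset a A)
      have haB : a ∉ B := Finset.disjoint_left.mp hAB haA
      have haU : a ∉ A.erase a ∪ B := by simp [haB]
      have hfe : (A.erase a).filter (· < a) = ∅ := by
        refine Finset.filter_eq_empty_iff.mpr ?_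
        intro x hx
        exact not_lt.mpr (A.min'_le x (Finset.mem_erase.mp hx).2)
      have hfu : (A.erase a ∪ B).filter (· < a) = B.filter (· < a) := by
        rw [Finset.filter_union, hfe, Finset.empty_union]
      have hmmA : mm A B = (B.filter (· < a)).card + mm (A.erase a) B := by
        conv_lhs => rw [← Finset.insert_erase haA]
        exact mm_insert_left a _ B (Finset.notMem_erase a A)
      rw [eWedge_peel A hne, ← ha, mul_assoc, ih _ (Finset.erase_ssubset haA) B hd',
        mul_smul_comm, iota_not_mem_mul _ a haU, smul_smul, hfu,
        ← Finset.insert_union, Finset.insert_erase haA, hmmA, pow_add, mul_comm]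

lemma eWedge_mul_eWedge_zero (A : Finset (Fin n)) : ∀ B : Finset (Fin n), ¬ Disjoint A B →
    eWedge A * eWedge B = 0 := by
  induction A using Finset.strongInduction with
  | _ A ih =>
    intro B hAB
    have hne : A.Nonempty := by
      rcases A.eq_empty_or_nonempty with rfl | h
      · exact absurd (Finset.disjoint_empty_left B) hAB
      · exact h
    set a := A.min' hne with ha
    have haA : a ∈ A := A.min'_mem hne
    rw [eWedge_peel A hne, ← ha, mul_assoc]
    by_cases hd : Disjoint (A.erase a) B
    · have haB : a ∈ B := by
        rcases Finset.not_disjoint_iff.mp hAB with ⟨x, hxA, hxB⟩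
        rcases eq_or_ne x a with rfl | hxa
        · exact hxB
        · exact absurd hxB (Finset.disjoint_left.mp hd (Finset.mem_erase.mpr ⟨hxa, hxA⟩))
      rw [eWedge_mul_eWedge _ B hd, mul_smul_comm,
        iota_mem_mul _ a (Finset.mem_union_right _ haB), smul_zero]
    · rw [ih _ (Finset.erase_ssubset haA) B hd, mul_zero]


lemma invCount_bridge (I K : Finset (Fin n)) :
    invCount (((I.sort (· ≤ ·)) ++ (K.sort (· ≤ ·))).map Fin.val) = mm I K := by
  rcases Nat.eq_zero_or_pos n with rfl | hn
  · have hI : I = ∅ := Subsingleton.elim _ _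
    have hK : K = ∅ := Subsingleton.elim _ _
    subst hI; subst hK
    simp [invCount, mm]
  · set lI := I.sort (· ≤ ·) with hlI
    set lK := K.sort (· ≤ ·) with hlK
    set l' : List (Fin n) := lI ++ lK with hl'
    set l : List ℕ := l'.map Fin.val with hl
    have hlen' : l'.length = lI.length + lK.length := List.length_append
    have hlen : l.length = l'.length := List.length_map _
    set d : Fin n := ⟨0, hn⟩ with hd
    have hgetl : ∀ i, i < l'.length → l.getD i 0 = (l'.getD i d).val := by
      intro i h
      rw [hl, List.getD_eq_getElem _ _ (by simpa using h), List.getElem_map,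
        List.getD_eq_getElem _ _ h]
    have hIsort : ∀ i j (hi : i < lI.length) (hj : j < lI.length), i < j → lI[i] < lI[j] :=
      fun i j hi hj hij =>
        List.pairwise_iff_getElem.mp (Finset.sortedLT_sort I).pairwise i j hi hj hij
    have hKsort : ∀ i j (hi : i < lK.length) (hj : j < lK.length), i < j → lK[i] < lK[j] :=
      fun i j hi hj hij =>
        List.pairwise_iff_getElem.mp (Finset.sortedLT_sort K).pairwise i j hi hj hij
    have hvalmem : ∀ i (h : i < l'.length), l.getD i 0 = (l'[i]'h).val := by
      intro i h
      rw [hgetl i h, List.getD_eq_getElem _ _ h]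
    rw [invCount, mm]
    set s := ((Finset.range l.length ×ˢ Finset.range l.length).filter
      (fun p => p.1 < p.2 ∧ l.getD p.2 0 < l.getD p.1 0)) with hs
    set t := ((I ×ˢ K).filter fun p : Fin n × Fin n => p.2 < p.1) with ht
    have hmem_s : ∀ p : ℕ × ℕ, p ∈ s ↔
        (p.1 < l.length ∧ p.2 < l.length) ∧ p.1 < p.2 ∧ l.getD p.2 0 < l.getD p.1 0 := by
      intro p
      rw [hs, Finset.mem_filter, Finset.mem_product, Finset.mem_range, Finset.mem_range]
    have hmem_t : ∀ q : Fin n × Fin n, q ∈ t ↔ (q.1 ∈ I ∧ q.2 ∈ K) ∧ q.2 < q.1 := by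
      intro q
      rw [ht, Finset.mem_filter, Finset.mem_product]
    have hsplit : ∀ p : ℕ × ℕ, p ∈ s → p.1 < lI.length ∧ lI.length ≤ p.2 ∧ p.2 < l'.length := by
      intro p hp
      obtain ⟨⟨h1, h2⟩, h12, hv⟩ := (hmem_s p).mp hp
      have h1' : p.1 < l'.length := by omega
      have h2' : p.2 < l'.length := by omega
      rw [hvalmem _ h1', hvalmem _ h2'] at hv
      constructor
      · by_contra hc
        push_neg at hc
        have hb1 : p.1 - lI.length < lK.length := by omega
        have hb2 : p.2 - lI.length < lK.length := by omega
        have hc2 : lI.length ≤ p.2 := by omega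
        have e1 : l'[p.1]'h1' = lK[p.1 - lI.length]'hb1 := List.getElem_append_right hc
        have e2 : l'[p.2]'h2' = lK[p.2 - lI.length]'hb2 := List.getElem_append_right hc2
        have hmono := hKsort _ _ hb1 hb2 (by omega)
        rw [← e1, ← e2] at hmono
        have := Fin.lt_def.mp hmono
        omega
      · refine ⟨?_, h2'⟩
        by_contra hc
        push_neg at hc
        have hb1 : p.1 < lI.length := by omega
        have e1 : l'[p.1]'h1' = lI[p.1]'hb1 := List.getElem_append_left hb1
        have e2 : l'[p.2]'h2' = lI[p.2]'hc := List.getElem_append_left hc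
        have hmono := hIsort _ _ hb1 hc h12
        rw [← e1, ← e2] at hmono
        have := Fin.lt_def.mp hmono
        omega
    refine Finset.card_nbij' (fun p => (l'.getD p.1 d, l'.getD p.2 d))
      (fun q => (lI.idxOf q.1, lI.length + lK.idxOf q.2)) ?_ ?_ ?_ ?_
    · -- maps s to t
      intro p hp
      dsimp only
      obtain ⟨hp1, hp2, hp2'⟩ := hsplit p hp
      obtain ⟨⟨h1, h2⟩, h12, hv⟩ := (hmem_s p).mp hp
      have h1' : p.1 < l'.length := by omega
      rw [hvalmem _ h1', hvalmem _ hp2'] at hv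
      have hb2 : p.2 - lI.length < lK.length := by omega
      have e1 : l'.getD p.1 d = lI[p.1]'hp1 := by
        rw [List.getD_eq_getElem _ _ h1']
        exact List.getElem_append_left hp1
      have e2 : l'.getD p.2 d = lK[p.2 - lI.length]'hb2 := by
        rw [List.getD_eq_getElem _ _ hp2']
        exact List.getElem_append_right hp2
      have e1' : l'[p.1]'h1' = lI[p.1]'hp1 := List.getElem_append_left hp1
      have e2' : l'[p.2]'hp2' = lK[p.2 - lI.length]'hb2 := List.getElem_append_right hp2
      rw [Finset.mem_coe, hmem_t]
      refine ⟨⟨?_, ?_⟩, ?_⟩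
      · rw [e1]; exact (Finset.mem_sort _).mp (List.getElem_mem _)
      · rw [e2]; exact (Finset.mem_sort _).mp (List.getElem_mem _)
      · show l'.getD p.2 d < l'.getD p.1 d
        rw [List.getD_eq_getElem _ _ h1', List.getD_eq_getElem _ _ hp2']
        exact Fin.lt_def.mpr hv
    · -- maps t to s
      intro q hq
      dsimp only
      obtain ⟨⟨hq1, hq2⟩, hqlt⟩ := (hmem_t q).mp hq
      have m1 : q.1 ∈ lI := (Finset.mem_sort _).mpr hq1
      have m2 : q.2 ∈ lK := (Finset.mem_sort _).mpr hq2
      have i1 : lI.idxOf q.1 < lI.length := List.idxOf_lt_length_iff.mpr m1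
      have i2 : lK.idxOf q.2 < lK.length := List.idxOf_lt_length_iff.mpr m2
      have hL1 : lI.idxOf q.1 < l'.length := by omega
      have hL2 : lI.length + lK.idxOf q.2 < l'.length := by omega
      have hd2 : lI.length + lK.idxOf q.2 - lI.length < lK.length := by omega
      have e1 : l.getD (lI.idxOf q.1) 0 = (q.1 : ℕ) := by
        rw [hvalmem _ hL1]
        have e : l'[lI.idxOf q.1]'hL1 = lI[lI.idxOf q.1]'i1 :=
          List.getElem_append_left i1
        rw [e, List.getElem_idxOf i1]
      have e2 : l.getD (lI.length + lK.idxOf q.2) 0 = (q.2 : ℕ) := by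
        rw [hvalmem _ hL2]
        have e : l'[lI.length + lK.idxOf q.2]'hL2
            = lK[lI.length + lK.idxOf q.2 - lI.length]'hd2 :=
          List.getElem_append_right (by omega)
        rw [e]
        have h3 : lI.length + lK.idxOf q.2 - lI.length = lK.idxOf q.2 := by omega
        have e' : lK[lI.length + lK.idxOf q.2 - lI.length]'hd2
            = lK[lK.idxOf q.2]'i2 := by
          congr 1
        rw [e', List.getElem_idxOf i2]
      rw [Finset.mem_coe, hmem_s]
      have hvlt : (q.2 : ℕ) < (q.1 : ℕ) := Fin.lt_def.mp hqlt
      exact ⟨⟨by omega, by omega⟩, by omega, by rw [e1, e2]; exact hvlt⟩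
    · -- left inverse
      intro p hp
      obtain ⟨hp1, hp2, hp2'⟩ := hsplit p hp
      have h1' : p.1 < l'.length := by omega
      have hb2 : p.2 - lI.length < lK.length := by omega
      have e1 : l'.getD p.1 d = lI[p.1]'hp1 := by
        rw [List.getD_eq_getElem _ _ h1']
        exact List.getElem_append_left hp1
      have e2 : l'.getD p.2 d = lK[p.2 - lI.length]'hb2 := by
        rw [List.getD_eq_getElem _ _ hp2']
        exact List.getElem_append_right hp2
      have r1 : lI.idxOf (l'.getD p.1 d) = p.1 := by
        rw [e1]; exact (Finset.sort_nodup _ _).idxOf_getElem _ _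
      have r2 : lK.idxOf (l'.getD p.2 d) = p.2 - lI.length := by
        rw [e2]; exact (Finset.sort_nodup _ _).idxOf_getElem _ _
      have : (lI.idxOf (l'.getD p.1 d), lI.length + lK.idxOf (l'.getD p.2 d))
          = (p.1, p.2) := by
        rw [r1, r2]
        have : lI.length + (p.2 - lI.length) = p.2 := by omega
        rw [this]
      simpa using this
    · -- right inverse
      intro q hq
      dsimp only
      obtain ⟨⟨hq1, hq2⟩, _⟩ := (hmem_t q).mp hq
      have m1 : q.1 ∈ lI := (Finset.mem_sort _).mpr hq1
      have m2 : q.2 ∈ lK := (Finset.mem_sort _).mpr hq2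
      have i1 : lI.idxOf q.1 < lI.length := List.idxOf_lt_length_iff.mpr m1
      have i2 : lK.idxOf q.2 < lK.length := List.idxOf_lt_length_iff.mpr m2
      have hL1 : lI.idxOf q.1 < l'.length := by omega
      have hL2 : lI.length + lK.idxOf q.2 < l'.length := by omega
      have hd2 : lI.length + lK.idxOf q.2 - lI.length < lK.length := by omega
      have e1 : l'.getD (lI.idxOf q.1) d = q.1 := by
        rw [List.getD_eq_getElem _ _ hL1]
        have e : l'[lI.idxOf q.1]'hL1 = lI[lI.idxOf q.1]'i1 :=
          List.getElem_append_left i1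
        rw [e]; exact List.getElem_idxOf i1
      have e2 : l'.getD (lI.length + lK.idxOf q.2) d = q.2 := by
        rw [List.getD_eq_getElem _ _ hL2]
        have e : l'[lI.length + lK.idxOf q.2]'hL2
            = lK[lI.length + lK.idxOf q.2 - lI.length]'hd2 :=
          List.getElem_append_right (by omega)
        rw [e]
        have e' : lK[lI.length + lK.idxOf q.2 - lI.length]'hd2
            = lK[lK.idxOf q.2]'i2 := by
          congr 1
          omega
        rw [e']; exact List.getElem_idxOf i2
      rw [e1, e2]

end DotBasisAux

open DotBasisAux

lemma neg_one_pow_parity (a b : ℕ) (h : a % 2 = b % 2) : ((-1 : ℤ)) ^ a = (-1) ^ b := by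
  rcases Nat.even_or_odd a with ha | ha
  · have ha' := Nat.even_iff.mp ha
    rw [ha.neg_one_pow, (Nat.even_iff.mpr (by omega)).neg_one_pow]
  · have ha' := Nat.odd_iff.mp ha
    rw [ha.neg_one_pow, (Nat.odd_iff.mpr (by omega)).neg_one_pow]

/-- For an ordered multi-index `J` and a sub-multi-index `I ⊆ J`
with complement `K = J \ I`: if the ordered union `I ∪ K` is an even permutation
of `J` (equivalently the concatenated list `I, K` has evenly many inversions), then
`e_I · e_J = (-1)^{|K| (n - |J|)} e_K`; and `e_I · e_J = 0` whenever `I ⊄ J`. -/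
theorem dot_basis {n : ℕ}
    (star : ExtA n →ₗ[ℝ] ExtA n) (hstar : IsHodgeStar star)
    (I J : Finset (Fin n)) :
    (I ⊆ J →
      Even (invCount (((I.sort (· ≤ ·)) ++ ((J \ I).sort (· ≤ ·))).map Fin.val)) →
      star (eWedge I * star (eWedge J)) =
        ((-1 : ℤ) ^ ((J \ I).card * (n - J.card))) • eWedge (J \ I)) ∧
    (¬ I ⊆ J → star (eWedge I * star (eWedge J)) = 0) := by
  constructor
  · intro hIJ heven
    rw [invCount_bridge] at heven
    have hdisjIC : Disjoint I Jᶜ := (disjoint_compl_right : Disjoint J Jᶜ).mono_left hIJ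
    have hcompl : (I ∪ Jᶜ)ᶜ = J \ I := by
      rw [Finset.compl_union, compl_compl, sdiff_eq, Finset.inter_comm]; rfl
    rw [hstar J, mul_smul_comm, map_zsmul, eWedge_mul_eWedge I Jᶜ hdisjIC, map_zsmul,
      hstar (I ∪ Jᶜ), hcompl, smul_smul, smul_smul]
    congr 1
    have hsJ : shuffleSign J = (-1 : ℤ) ^ (mm J Jᶜ) := rfl
    have hsS : shuffleSign (I ∪ Jᶜ) = (-1 : ℤ) ^ (mm (I ∪ Jᶜ) (J \ I)) := by
      rw [shuffleSign, hcompl]; rfl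
    have hJun : I ∪ (J \ I) = J := Finset.union_sdiff_of_subset hIJ
    have h1 : mm J Jᶜ = mm I Jᶜ + mm (J \ I) Jᶜ := by
      have := mm_union_left I (J \ I) Jᶜ Finset.disjoint_sdiff
      rw [hJun] at this
      exact this
    have h2 : mm (I ∪ Jᶜ) (J \ I) = mm I (J \ I) + mm Jᶜ (J \ I) :=
      mm_union_left _ _ _ hdisjIC
    have hKC : Disjoint (J \ I) Jᶜ :=
      (disjoint_compl_right : Disjoint J Jᶜ).mono_left (Finset.sdiff_subset)
    have h3 : mm (J \ I) Jᶜ + mm Jᶜ (J \ I) = (J \ I).card * Jᶜ.card :=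
      mm_add_mm_swap _ _ hKC
    have hCcard : Jᶜ.card = n - J.card := by
      rw [Finset.card_compl, Fintype.card_fin]
    rw [hCcard] at h3
    obtain ⟨m, hm⟩ := heven
    rw [hsJ, hsS]
    simp only [← pow_add]
    apply neg_one_pow_parity
    generalize hP : (J \ I).card * (n - J.card) = P at h3 ⊢
    omega
  · intro hIJ
    have hnd : ¬ Disjoint I Jᶜ := by
      rcases Finset.not_subset.mp hIJ with ⟨x, hxI, hxJ⟩
      exact Finset.not_disjoint_iff.mpr ⟨x, hxI, Finset.mem_compl.mpr hxJ⟩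
    rw [hstar J, mul_smul_comm, map_zsmul, eWedge_mul_eWedge_zero I Jᶜ hnd, map_zero, smul_zero]
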